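/- Let T : X → 2^X be a paramonotone operator with convex domain. Then T⁻¹(0) = {x : 0 ∈ Tx} is a convex set. -/

import Mathlib

/-- For a paramonotone operator with convex domain, T⁻¹(0) is convex. -/
theorem paramonotone_inverse_zero_convex
    {X : Type*} [NormedAddCommGroup X] [InnerProductSpace ℝ X] [CompleteSpace X]
    (T : X → Set X)
    (hmono : ∀ x x' y y', x' ∈ T x → y' ∈ T y → (0:ℝ) ≤ inner ℝ (x - y) (x' - y'))
    (hpara : ∀ x x' y y', x' ∈ T x → y' ∈ T y →
      (inner ℝ (x - y) (x' - y') : ℝ) = 0 → x' ∈ T y ∧ y' ∈ T x)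
    (hdom : Convex ℝ {x | (T x).Nonempty}) :
    Convex ℝ {x | (0:X) ∈ T x} := by
  intro x hx y hy a b ha hb hab
  rcases eq_or_lt_of_le ha with ha0 | ha
  · have hb1 : b = 1 := by linarith
    simpa [← ha0, hb1] using hy
  rcases eq_or_lt_of_le hb with hb0 | hb
  · have ha1 : a = 1 := by linarith
    simpa [← hb0, ha1] using hx
  have hzdom : (T (a • x + b • y)).Nonempty :=
    hdom (Set.mem_setOf_eq ▸ ⟨0, hx⟩) (Set.mem_setOf_eq ▸ ⟨0, hy⟩) ha.le hb.le hab
  obtain ⟨w, hw⟩ := hzdom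
  have e1 : a • x + b • y - x = b • (y - x) := by
    have : a = 1 - b := by linarith
    rw [this]; module
  have e2 : a • x + b • y - y = a • (x - y) := by
    have : b = 1 - a := by linarith
    rw [this]; module
  have h1 : (0:ℝ) ≤ inner ℝ (a • x + b • y - x) (w - 0) := hmono _ w x 0 hw hx
  have h2 : (0:ℝ) ≤ inner ℝ (a • x + b • y - y) (w - 0) := hmono _ w y 0 hw hy
  rw [e1, sub_zero, real_inner_smul_left] at h1
  rw [e2, sub_zero, real_inner_smul_left] at h2
  have hxy : (inner ℝ (x - y) w : ℝ) = - inner ℝ (y - x) w := by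
    rw [← inner_neg_left, neg_sub]
  rw [hxy] at h2
  have hc : (inner ℝ (y - x) w : ℝ) = 0 := by nlinarith
  have h0 : (inner ℝ (a • x + b • y - x) (w - 0) : ℝ) = 0 := by
    rw [e1, sub_zero, real_inner_smul_left, hc, mul_zero]
  exact (hpara _ w x 0 hw hx h0).2
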